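/- For all natural numbers n and k with n even: Σ_{m=k}^{n} (-1)^{m-k} · C(m,k) · C(n-m,k) = C(n/2, k); and for n odd the sum equals 0. -/

import Mathlib

open Finset PowerSeries

noncomputable def Wser (k : ℕ) : PowerSeries ℤ :=
  PowerSeries.mk (fun n => if Even n then ((k + n / 2).choose k : ℤ) else 0)

lemma Wser_mul_aux (k : ℕ) : Wser (k + 1) * (1 - X ^ 2) = Wser k := by
  ext n
  rw [mul_sub, mul_one, map_sub, coeff_mul_X_pow']
  rcases n with _ | _ | n
  · simp [Wser, coeff_mk]
  · simp [Wser, coeff_mk, Nat.even_iff]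
  · rw [if_pos (by omega : 2 ≤ n + 1 + 1)]
    have hsub : n + 1 + 1 - 2 = n := rfl
    rw [hsub]
    simp only [Wser, coeff_mk]
    rcases Nat.even_or_odd n with hn | hn
    · have hn2 : Even (n + 1 + 1) := by rcases hn with ⟨m, hm⟩; exact ⟨m + 1, by omega⟩
      simp only [if_pos hn2, if_pos hn]
      have hdiv : (n + 1 + 1) / 2 = n / 2 + 1 := by omega
      rw [hdiv]
      have h1 : k + 1 + (n / 2 + 1) = (k + 1 + n / 2) + 1 := by ring
      rw [h1, Nat.choose_succ_succ' (k + 1 + n / 2) k]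
      have h2 : k + (n / 2 + 1) = k + 1 + n / 2 := by ring
      push_cast
      rw [h2]
      ring
    · rw [Nat.odd_iff] at hn
      have hn' : ¬ Even n := by simp [Nat.even_iff, hn]
      have hn2 : ¬ Even (n + 1 + 1) := by simp [Nat.even_iff, Nat.add_mod, hn]
      simp only [if_neg hn2, if_neg hn']
      ring

lemma Wser_zero_mul : Wser 0 * (1 - X ^ 2) = 1 := by
  ext n
  rw [mul_sub, mul_one, map_sub, coeff_mul_X_pow', coeff_one]
  rcases n with _ | _ | n
  · simp [Wser, coeff_mk]
  · simp [Wser, coeff_mk, Nat.even_iff]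
  · rw [if_pos (by omega : 2 ≤ n + 1 + 1), if_neg (by omega : ¬ n + 1 + 1 = 0)]
    have hsub : n + 1 + 1 - 2 = n := rfl
    rw [hsub]
    simp only [Wser, coeff_mk, Nat.choose_zero_right, Nat.cast_one, zero_add]
    rcases Nat.even_or_odd n with hn | hn
    · have hn2 : Even (n + 1 + 1) := by rcases hn with ⟨m, hm⟩; exact ⟨m + 1, by omega⟩
      simp only [if_pos hn2, if_pos hn]
      ring
    · rw [Nat.odd_iff] at hn
      have hn' : ¬ Even n := by simp [Nat.even_iff, hn]
      have hn2 : ¬ Even (n + 1 + 1) := by simp [Nat.even_iff, Nat.add_mod, hn]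
      simp only [if_neg hn2, if_neg hn']
      ring

lemma Wser_mul_pow (k : ℕ) : Wser k * (1 - X ^ 2) ^ (k + 1) = 1 := by
  induction k with
  | zero => simpa using Wser_zero_mul
  | succ k ih =>
    have : Wser (k + 1) * (1 - X ^ 2) ^ (k + 1 + 1)
        = (Wser (k + 1) * (1 - X ^ 2)) * (1 - X ^ 2) ^ (k + 1) := by ring
    rw [this, Wser_mul_aux, ih]

lemma key_sum (k N : ℕ) :
    ∑ j ∈ range (N + 1), ((k + j).choose k : ℤ) *
        ((-1 : ℤ) ^ (N - j) * ((k + (N - j)).choose k : ℤ))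
      = if Even N then ((k + N / 2).choose k : ℤ) else 0 := by
  set u := (invOneSubPow ℤ (k + 1)).val with hu_def
  have hu : u * (1 - X) ^ (k + 1) = 1 := by
    rw [hu_def, ← invOneSubPow_inv_eq_one_sub_pow]
    exact (invOneSubPow ℤ (k + 1)).val_inv
  set v := rescale (-1 : ℤ) u with hv_def
  have hv : v * (1 + X) ^ (k + 1) = 1 := by
    have h := congrArg (rescale (-1 : ℤ)) hu
    rw [map_mul, map_pow, map_one, map_sub, map_one, rescale_neg_one_X, sub_neg_eq_add] at h
    exact h
  have huv : u * v = Wser k := by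
    have h1 : (u * v) * ((1 - X ^ 2) ^ (k + 1)) = 1 := by
      have : (1 - X ^ 2 : PowerSeries ℤ) = (1 - X) * (1 + X) := by ring
      rw [this, mul_pow]
      calc (u * v) * ((1 - X) ^ (k + 1) * (1 + X) ^ (k + 1))
          = (u * (1 - X) ^ (k + 1)) * (v * (1 + X) ^ (k + 1)) := by ring
        _ = 1 := by rw [hu, hv, one_mul]
    calc u * v = (u * v) * (Wser k * (1 - X ^ 2) ^ (k + 1)) := by rw [Wser_mul_pow, mul_one]
      _ = Wser k * ((u * v) * (1 - X ^ 2) ^ (k + 1)) := by ring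
      _ = Wser k := by rw [h1, mul_one]
  have hcoeff := congrArg (PowerSeries.coeff (R := ℤ) N) huv
  rw [PowerSeries.coeff_mul] at hcoeff
  rw [Finset.Nat.sum_antidiagonal_eq_sum_range_succ_mk] at hcoeff
  have hcu : ∀ i, PowerSeries.coeff (R := ℤ) i u = ((k + i).choose k : ℤ) := by
    intro i
    rw [hu_def, invOneSubPow_val_succ_eq_mk_add_choose, coeff_mk]
  have hcv : ∀ i, PowerSeries.coeff (R := ℤ) i v = (-1 : ℤ) ^ i * ((k + i).choose k : ℤ) := by
    intro i
    rw [hv_def, coeff_rescale, hcu]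
  simp only [hcu, hcv, Wser, coeff_mk] at hcoeff
  exact hcoeff

theorem stmt_15 (n k : ℕ) :
    ∑ m ∈ Icc k n, (-1 : ℤ) ^ (m - k) * (m.choose k : ℤ) * ((n - m).choose k : ℤ) =
      if Odd n then 0 else ((n / 2).choose k : ℤ) := by
  by_cases h2k : 2 * k ≤ n
  · have hzero : ∀ m ∈ Icc k n, m ∉ Icc k (n - k) →
        (-1 : ℤ) ^ (m - k) * (m.choose k : ℤ) * ((n - m).choose k : ℤ) = 0 := by
      intro m hm hm'
      rw [mem_Icc] at hm
      rw [mem_Icc] at hm'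
      have h : n - m < k := by omega
      rw [Nat.choose_eq_zero_of_lt h]
      simp
    have hsub : Icc k (n - k) ⊆ Icc k n := Icc_subset_Icc_right (by omega)
    rw [← Finset.sum_subset hsub hzero, ← Finset.Ico_add_one_right_eq_Icc, Finset.sum_Ico_eq_sum_range]
    set N := n - 2 * k with hN
    have hrange : n - k + 1 - k = N + 1 := by omega
    rw [hrange]
    have hkey := key_sum k N
    rw [← Finset.sum_range_reflect
      (fun j => ((k + j).choose k : ℤ) * ((-1 : ℤ) ^ (N - j) * ((k + (N - j)).choose k : ℤ)))
      (N + 1)] at hkey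
    have hsame : ∑ j ∈ range (N + 1),
        (-1 : ℤ) ^ (k + j - k) * ((k + j).choose k : ℤ) * ((n - (k + j)).choose k : ℤ)
        = ∑ j ∈ range (N + 1), ((k + (N + 1 - 1 - j)).choose k : ℤ) *
            ((-1 : ℤ) ^ (N - (N + 1 - 1 - j)) * ((k + (N - (N + 1 - 1 - j))).choose k : ℤ)) := by
      refine Finset.sum_congr rfl fun j hj => ?_
      rw [mem_range] at hj
      have h1 : k + j - k = j := by omega
      have h2 : n - (k + j) = k + (N + 1 - 1 - j) := by omega
      have h3 : N - (N + 1 - 1 - j) = j := by omega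
      rw [h1, h2, h3]
      ring
    rw [hsame, hkey]
    have hpar : Even N ↔ ¬ Odd n := by
      rw [Nat.even_iff, Nat.odd_iff]
      omega
    have hdiv : k + N / 2 = n / 2 := by omega
    rw [hdiv]
    by_cases hodd : Odd n
    · rw [if_neg (by rw [hpar]; simpa using hodd), if_pos hodd]
    · rw [if_pos (hpar.mpr hodd), if_neg hodd]
  · rw [Finset.sum_eq_zero]
    · split
      · rfl
      · rw [Nat.choose_eq_zero_of_lt (by omega : n / 2 < k), Nat.cast_zero]
    · intro m hm
      rw [mem_Icc] at hm
      rw [Nat.choose_eq_zero_of_lt (show n - m < k by omega)]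
      simp
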